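/- The even-indexed overcubic partition pair numbers satisfy the generating function identity ∑_{n≥0} b̄(2n) q^n = (q^2;q^2)_∞^{16} / ((q;q)_∞^{16} (q^4;q^4)_∞^4) as formal power series over ℤ. -/

import Mathlib

/-- The formal power series `(q^d; q^d)_∞ = ∏_{m ≥ 1} (1 - q^{d·m})` over `ℤ`.
Its `n`-th coefficient is defined as the `n`-th coefficient of the finite truncated
product `∏_{m=1}^{n+1} (1 - q^{d·m})`; for `d ≥ 1` the omitted factors do not affect
the coefficient of `q^n`, so this is the usual infinite product. -/
noncomputable def pochE (d : ℕ) : PowerSeries ℤ :=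
  PowerSeries.mk fun n =>
    PowerSeries.coeff n
      (∏ m ∈ Finset.range (n + 1), (1 - (PowerSeries.X : PowerSeries ℤ) ^ (d * (m + 1))))

namespace OPP

open PowerSeries Finset

abbrev R := PowerSeries ℤ

/-- truncated Euler product -/
noncomputable def P (d N : ℕ) : R := ∏ m ∈ Finset.range N, (1 - (X : R) ^ (d * (m + 1)))

/-- congruence modulo X^K -/
def MD (K : ℕ) (f g : R) : Prop := (X : R) ^ K ∣ f - g

lemma MD.of_eq {K : ℕ} {f g : R} (h : f = g) : MD K f g := by simp [MD, h]

lemma MD.refl {K : ℕ} (f : R) : MD K f f := MD.of_eq rfl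

lemma MD.symm {K : ℕ} {f g : R} (h : MD K f g) : MD K g f := by
  rw [MD, show g - f = -(f - g) by ring]
  exact h.neg_right

lemma MD.trans {K : ℕ} {f g h : R} (h1 : MD K f g) (h2 : MD K g h) : MD K f h := by
  rw [MD, show f - h = (f - g) + (g - h) by ring]
  exact dvd_add h1 h2

lemma MD.add {K : ℕ} {f f' g g' : R} (h1 : MD K f f') (h2 : MD K g g') :
    MD K (f + g) (f' + g') := by
  rw [MD, show f + g - (f' + g') = (f - f') + (g - g') by ring]
  exact dvd_add h1 h2

lemma MD.mul {K : ℕ} {f f' g g' : R} (h1 : MD K f f') (h2 : MD K g g') :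
    MD K (f * g) (f' * g') := by
  have : f * g - f' * g' = (f - f') * g + f' * (g - g') := by ring
  rw [MD, this]
  exact dvd_add (h1.mul_right _) (h2.mul_left _)

lemma MD.pow {K : ℕ} {f f' : R} (h : MD K f f') (n : ℕ) : MD K (f ^ n) (f' ^ n) := by
  induction n with
  | zero => simpa using MD.refl 1
  | succ n ih => rw [pow_succ, pow_succ]; exact ih.mul h

lemma MD.sum {K : ℕ} {ι : Type} (s : Finset ι) (F G : ι → R)
    (h : ∀ j ∈ s, MD K (F j) (G j)) : MD K (∑ j ∈ s, F j) (∑ j ∈ s, G j) := by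
  rw [MD, ← Finset.sum_sub_distrib]
  exact Finset.dvd_sum h

lemma MD.mono {K K' : ℕ} {f g : R} (hK : K' ≤ K) (h : MD K f g) : MD K' f g :=
  dvd_trans (pow_dvd_pow _ hK) h

lemma MD.coeff_eq {K : ℕ} {f g : R} (h : MD K f g) {m : ℕ} (hm : m < K) :
    coeff m f = coeff m g := by
  have := (X_pow_dvd_iff.mp h) m hm
  rw [map_sub] at this
  linarith

lemma MD.ext {f g : R} (h : ∀ K, MD K f g) : f = g := by
  ext m
  exact (h (m + 1)).coeff_eq (Nat.lt_succ_self m)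

lemma MD_X_pow {K e : ℕ} (he : K ≤ e) (f : R) : MD K ((X : R) ^ e * f) 0 := by
  rw [MD, sub_zero]
  exact Dvd.dvd.mul_right (pow_dvd_pow _ he) f

/-- products of `1 - X^(e k)` with all exponents ≥ K are ≡ 1 mod X^K -/
lemma MD_prod_one {K : ℕ} {ι : Type} (s : Finset ι) (e : ι → ℕ)
    (h : ∀ k ∈ s, K ≤ e k) : MD K (∏ k ∈ s, (1 - (X : R) ^ (e k))) 1 := by
  classical
  induction s using Finset.induction_on with
  | empty => simpa using MD.refl 1
  | @insert a s' hx ih =>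
    rw [Finset.prod_insert hx]
    have h1 : MD K (1 - (X : R) ^ (e a)) 1 := by
      rw [MD]
      have : (1 - (X : R) ^ (e a)) - 1 = -(X ^ (e a)) := by ring
      rw [this]
      exact (pow_dvd_pow _ (h a (Finset.mem_insert_self a s'))).neg_right
    have h2 := ih (fun k hk => h k (Finset.mem_insert_of_mem hk))
    simpa using h1.mul h2

lemma P_succ (d M : ℕ) : P d (M + 1) = P d M * (1 - (X : R) ^ (d * (M + 1))) := by
  rw [P, Finset.prod_range_succ]; rfl

lemma MD_P_succ {d : ℕ} (hd : 1 ≤ d) (M : ℕ) : MD (M + 1) (P d (M + 1)) (P d M) := by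
  rw [MD, P_succ]
  have : P d M * (1 - (X : R) ^ (d * (M + 1))) - P d M = -(X ^ (d * (M+1)) * P d M) := by ring
  rw [this]
  refine Dvd.dvd.neg_right ?_
  exact Dvd.dvd.mul_right (pow_dvd_pow _ (by nlinarith)) _

lemma MD_P {d K N N' : ℕ} (hd : 1 ≤ d) (hN : K ≤ N) (hN' : N ≤ N') :
    MD K (P d N') (P d N) := by
  induction N' with
  | zero => simpa [show N = 0 by omega] using MD.refl (P d 0)
  | succ M ih =>
    rcases Nat.lt_or_ge N (M+1) with h | h
    · exact ((MD_P_succ hd M).mono (by omega)).trans (ih (by omega))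
    · simpa [show N = M + 1 by omega] using MD.refl (P d (M+1))

lemma coeff_pochE (d m : ℕ) : coeff m (pochE d) = coeff m (P d (m + 1)) := by
  rw [pochE, coeff_mk]; rfl

lemma MD_pochE {d K N : ℕ} (hd : 1 ≤ d) (hN : K ≤ N) : MD K (pochE d) (P d N) := by
  rw [MD]
  rw [X_pow_dvd_iff]
  intro m hm
  rw [map_sub, coeff_pochE, sub_eq_zero]
  have h1 : MD (m+1) (P d (max N (m+1))) (P d (m+1)) :=
    MD_P hd le_rfl (le_max_right _ _)
  have h2 : MD (m+1) (P d (max N (m+1))) (P d N) :=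
    MD_P hd (by omega) (le_max_left _ _)
  rw [← h1.coeff_eq (Nat.lt_succ_self m), h2.coeff_eq (Nat.lt_succ_self m)]

/-- Gaussian binomial (base q²) via Pascal recurrence -/
noncomputable def qb : ℕ → ℕ → R
  | _, 0 => 1
  | 0, _ + 1 => 0
  | N + 1, j + 1 => qb N (j + 1) + (X : R) ^ (2 * (N - j)) * qb N j

lemma qb_zero_right (N : ℕ) : qb N 0 = 1 := by cases N <;> rfl

lemma qb_succ_succ (N j : ℕ) :
    qb (N + 1) (j + 1) = qb N (j + 1) + (X : R) ^ (2 * (N - j)) * qb N j := rfl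

lemma qb_of_gt : ∀ {N j : ℕ}, N < j → qb N j = 0 := by
  intro N
  induction N with
  | zero => intro j hj; match j, hj with | j+1, _ => rfl
  | succ N ih =>
    intro j hj
    match j, hj with
    | j+1, hj =>
      rw [qb_succ_succ, ih (by omega), ih (by omega), mul_zero, add_zero]

lemma qb_diag : ∀ N, qb N N = 1 := by
  intro N
  induction N with
  | zero => rfl
  | succ N ih =>
    rw [qb_succ_succ, qb_of_gt (Nat.lt_succ_self N), Nat.sub_self, ih]
    ring

/-- the key exact product identity `(q²;q²)_j (q²;q²)_{N-j} [N,j]_{q²} = (q²;q²)_N` -/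
lemma qb_dagger : ∀ N j, j ≤ N → P 2 j * P 2 (N - j) * qb N j = P 2 N := by
  intro N
  induction N with
  | zero => intro j hj; interval_cases j; simp [qb_zero_right, P]
  | succ N ih =>
    intro j hj
    match j with
    | 0 => simp [qb_zero_right, P]
    | j + 1 =>
      have hjN : j ≤ N := by omega
      rcases Nat.lt_or_ge j N with hlt | hge
      · -- j + 1 ≤ N
        rw [qb_succ_succ, show N + 1 - (j + 1) = N - j by omega, mul_add]
        have ePn : P 2 (N - j) = P 2 (N - (j + 1)) * (1 - (X:R) ^ (2 * (N - j))) := by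
          rw [show N - j = (N - j - 1) + 1 by omega, P_succ,
            show 2 * ((N - j - 1) + 1) = 2 * (N - j) by omega,
            show N - j - 1 = N - (j+1) by omega]
        have t1 : P 2 (j + 1) * P 2 (N - j) * qb N (j + 1) =
            (1 - (X : R) ^ (2 * (N - j))) * P 2 N := by
          rw [ePn]
          calc P 2 (j+1) * (P 2 (N - (j+1)) * (1 - (X:R) ^ (2*(N-j)))) * qb N (j+1)
              = (1 - (X:R) ^ (2*(N-j))) * (P 2 (j+1) * P 2 (N-(j+1)) * qb N (j+1)) := by ring
            _ = (1 - (X:R) ^ (2*(N-j))) * P 2 N := by rw [ih (j+1) (by omega)]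
        have t2 : P 2 (j + 1) * P 2 (N - j) * ((X : R) ^ (2 * (N - j)) * qb N j) =
            (X : R) ^ (2 * (N - j)) * ((1 - (X : R) ^ (2 * (j + 1))) * P 2 N) := by
          rw [P_succ 2 j]
          calc P 2 j * (1 - (X:R)^(2*(j+1))) * P 2 (N - j) * ((X:R)^(2*(N-j)) * qb N j)
              = (X:R)^(2*(N-j)) * ((1 - (X:R)^(2*(j+1))) * (P 2 j * P 2 (N-j) * qb N j)) := by
                ring
            _ = (X:R)^(2*(N-j)) * ((1 - (X:R)^(2*(j+1))) * P 2 N) := by rw [ih j hjN]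
        rw [t1, t2, P_succ]
        have e5 : (X : R) ^ (2 * (N - j)) * (X : R) ^ (2 * (j + 1)) = (X:R) ^ (2 * (N + 1)) := by
          rw [← pow_add]
          congr 1
          omega
        calc (1 - (X:R)^(2*(N-j))) * P 2 N + (X:R)^(2*(N-j)) * ((1 - (X:R)^(2*(j+1))) * P 2 N)
            = P 2 N * (1 - (X:R)^(2*(N-j)) * (X:R)^(2*(j+1))) := by ring
          _ = P 2 N * (1 - (X:R)^(2*(N+1))) := by rw [e5]
      · -- j = N
        have hje : j + 1 = N + 1 := by omega
        rw [hje, qb_diag, Nat.sub_self]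
        have h0 : P 2 0 = 1 := by simp [P]
        rw [h0]
        ring

/-- finite Cauchy identity: `∏_{k<N} (z - X^{2k+1}) = ∑_j (-1)^j X^{j²} [N,j]_{q²} z^{N-j}` -/
lemma cauchy : ∀ N : ℕ,
    ∏ k ∈ Finset.range N, (Polynomial.X - Polynomial.C ((X : R) ^ (2 * k + 1))) =
    ∑ j ∈ Finset.range (N + 1),
      Polynomial.C ((-1 : R) ^ j * (X : R) ^ (j ^ 2) * qb N j) * Polynomial.X ^ (N - j) := by
  intro N
  induction N with
  | zero => simp [qb_zero_right]
  | succ N ih =>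
    rw [Finset.prod_range_succ, ih, mul_sub]
    have hXpart :
        (∑ j ∈ Finset.range (N + 1),
          Polynomial.C ((-1 : R) ^ j * (X : R) ^ (j ^ 2) * qb N j) * Polynomial.X ^ (N - j)) *
            Polynomial.X =
        ∑ j ∈ Finset.range (N + 1),
          Polynomial.C ((-1 : R) ^ j * (X : R) ^ (j ^ 2) * qb N j) * Polynomial.X ^ (N + 1 - j) := by
      rw [Finset.sum_mul]
      refine Finset.sum_congr rfl fun j hj => ?_
      rw [Finset.mem_range] at hj
      rw [mul_assoc, ← pow_succ]
      congr 2
      omega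
    have hCpart :
        (∑ j ∈ Finset.range (N + 1),
          Polynomial.C ((-1 : R) ^ j * (X : R) ^ (j ^ 2) * qb N j) * Polynomial.X ^ (N - j)) *
            Polynomial.C ((X : R) ^ (2 * N + 1)) =
        ∑ j ∈ Finset.range (N + 1),
          Polynomial.C ((-1 : R) ^ j * (X : R) ^ (j ^ 2 + (2 * N + 1)) * qb N j) *
            Polynomial.X ^ (N - j) := by
      rw [Finset.sum_mul]
      refine Finset.sum_congr rfl fun j hj => ?_
      have hc : ((-1:R) ^ j * (X:R) ^ (j ^ 2) * qb N j) * (X:R) ^ (2 * N + 1) =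
          (-1:R) ^ j * (X:R) ^ (j ^ 2 + (2 * N + 1)) * qb N j := by
        rw [pow_add]; ring
      rw [mul_right_comm, ← Polynomial.C_mul, hc]
    rw [hXpart, hCpart]
    rw [Finset.sum_range_succ' (fun j => Polynomial.C ((-1 : R) ^ j * (X : R) ^ (j ^ 2) * qb (N+1) j)
      * Polynomial.X ^ (N + 1 - j)) (N + 1)]
    simp only [qb_zero_right, show (0:ℕ)^2 = 0 from rfl, pow_zero, mul_one, one_mul, map_one,
      Nat.sub_zero]
    have hsplit : ∀ j ∈ Finset.range (N + 1),
        Polynomial.C ((-1 : R) ^ (j+1) * (X : R) ^ ((j+1) ^ 2) * qb (N+1) (j+1)) *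
          Polynomial.X ^ (N + 1 - (j+1)) =
        Polynomial.C ((-1 : R) ^ (j+1) * (X : R) ^ ((j+1) ^ 2) * qb N (j+1)) * Polynomial.X ^ (N - j)
        - Polynomial.C ((-1 : R) ^ j * (X : R) ^ (j ^ 2 + (2 * N + 1)) * qb N j) *
          Polynomial.X ^ (N - j) := by
      intro j hj
      rw [Finset.mem_range] at hj
      have hjN : j ≤ N := by omega
      rw [qb_succ_succ, show N + 1 - (j+1) = N - j by omega]
      have e2 : (j+1) ^ 2 + 2 * (N - j) = j ^ 2 + (2 * N + 1) := by
        zify [hjN, show 2 * j ≤ 2 * N by omega]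
        ring
      have e3 : (-1:R) ^ (j+1) * (X:R) ^ ((j+1)^2) * ((X:R) ^ (2*(N-j)) * qb N j)
          = -((-1:R) ^ j * (X:R) ^ (j ^ 2 + (2*N+1)) * qb N j) := by
        rw [← e2, pow_add ((X:R)) ((j+1)^2), pow_succ]
        ring
      rw [mul_add, Polynomial.C_add, add_mul, e3, Polynomial.C_neg]
      ring
    rw [Finset.sum_congr rfl hsplit, Finset.sum_sub_distrib]
    -- remaining: S_X - S_C = (∑ A' - ∑ B) + X^{N+1}
    have hA : ∑ j ∈ Finset.range (N + 1),
        Polynomial.C ((-1 : R) ^ j * (X : R) ^ (j ^ 2) * qb N j) * Polynomial.X ^ (N + 1 - j) =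
        (∑ j ∈ Finset.range (N + 1),
          Polynomial.C ((-1 : R) ^ (j+1) * (X : R) ^ ((j+1) ^ 2) * qb N (j+1)) *
            Polynomial.X ^ (N - j)) + Polynomial.X ^ (N + 1) := by
      rw [Finset.sum_range_succ' (fun j => Polynomial.C ((-1 : R) ^ j * (X : R) ^ (j ^ 2) * qb N j)
        * Polynomial.X ^ (N + 1 - j)) N]
      simp only [qb_zero_right, show (0:ℕ)^2 = 0 from rfl, pow_zero, mul_one, one_mul, map_one,
        Nat.sub_zero]
      rw [Finset.sum_range_succ (fun j => Polynomial.C ((-1 : R) ^ (j+1) * (X : R) ^ ((j+1) ^ 2)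
        * qb N (j+1)) * Polynomial.X ^ (N - j)) N]
      rw [qb_of_gt (Nat.lt_succ_self N)]
      simp only [mul_zero, Polynomial.C_0, zero_mul, add_zero]
      congr 1
      refine Finset.sum_congr rfl fun j hj => ?_
      rw [Finset.mem_range] at hj
      congr 2
      omega
    rw [hA]
    ring

noncomputable def Podd (n : ℕ) : R := ∏ k ∈ Finset.range n, (1 - (X : R) ^ (2 * k + 1))

/-- |j - n| -/
def dist (j n : ℕ) : ℕ := (n - j) + (j - n)

lemma sum_odds (n : ℕ) : ∑ k ∈ Finset.range n, (2 * k + 1) = n ^ 2 := by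
  induction n with
  | zero => simp
  | succ n ih => rw [Finset.sum_range_succ, ih]; ring

lemma pairing (n : ℕ) :
    ∏ k ∈ Finset.range (2 * n), ((X : R) ^ (2 * n) - (X : R) ^ (2 * k + 1)) =
    (-1 : R) ^ n * (X : R) ^ (3 * n ^ 2) * (Podd n) ^ 2 := by
  have h2n : 2 * n = n + n := by omega
  rw [h2n, Finset.prod_range_add]
  have hfst : ∀ k ∈ Finset.range n, (X : R) ^ (n + n) - (X : R) ^ (2 * k + 1) =
      (-(X : R) ^ (2 * k + 1)) * (1 - (X : R) ^ (2 * (n - 1 - k) + 1)) := by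
    intro k hk
    rw [Finset.mem_range] at hk
    rw [neg_mul, mul_sub, mul_one, ← pow_add,
      show 2 * k + 1 + (2 * (n - 1 - k) + 1) = n + n by omega]
    ring
  have hsec : ∀ k ∈ Finset.range n, (X : R) ^ (n + n) - (X : R) ^ (2 * (n + k) + 1) =
      (X : R) ^ (n + n) * (1 - (X : R) ^ (2 * k + 1)) := by
    intro k hk
    rw [mul_sub, mul_one, ← pow_add,
      show n + n + (2 * k + 1) = 2 * (n + k) + 1 by omega]
  rw [Finset.prod_congr rfl hfst, Finset.prod_congr rfl hsec]
  rw [Finset.prod_mul_distrib, Finset.prod_mul_distrib]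
  have h1 : ∏ k ∈ Finset.range n, (-(X : R) ^ (2 * k + 1)) =
      (-1 : R) ^ n * (X : R) ^ (n ^ 2) := by
    have : ∀ k ∈ Finset.range n, (-(X : R) ^ (2 * k + 1)) = (-1 : R) * (X:R) ^ (2 * k + 1) := by
      intro k _; ring
    rw [Finset.prod_congr rfl this, Finset.prod_mul_distrib, Finset.prod_const,
      Finset.prod_pow_eq_pow_sum, sum_odds, Finset.card_range]
  have h2 : ∏ k ∈ Finset.range n, (1 - (X : R) ^ (2 * (n - 1 - k) + 1)) = Podd n :=
    Finset.prod_range_reflect (fun j => 1 - (X : R) ^ (2 * j + 1)) n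
  have h3 : ∏ _k ∈ Finset.range n, (X : R) ^ (n + n) = (X : R) ^ ((n + n) * n) := by
    rw [Finset.prod_const, ← pow_mul, Finset.card_range]
  rw [h1, h2, h3]
  have h4 : (X : R) ^ (n ^ 2) * (X : R) ^ ((n + n) * n) = (X : R) ^ (3 * n ^ 2) := by
    rw [← pow_add]
    congr 1
    ring
  calc (-1:R) ^ n * (X:R) ^ (n ^ 2) * Podd n * ((X:R) ^ ((n+n)*n) * Podd n)
      = (-1:R) ^ n * ((X:R) ^ (n ^ 2) * (X:R) ^ ((n+n)*n)) * (Podd n * Podd n) := by ring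
    _ = (-1:R) ^ n * ((X:R) ^ (3 * n ^ 2) * (Podd n) ^ 2) := by rw [h4, sq]; ring
    _ = (-1:R) ^ n * (X:R) ^ (3 * n ^ 2) * (Podd n) ^ 2 := by ring

lemma gauss_finite (n : ℕ) :
    ∑ j ∈ Finset.range (2 * n + 1),
      (-1 : R) ^ (j + n) * ((X : R) ^ (dist j n ^ 2) * qb (2 * n) j) = (Podd n) ^ 2 := by
  have hc := congrArg (Polynomial.eval ((X : R) ^ (2 * n))) (cauchy (2 * n))
  rw [Polynomial.eval_prod, Polynomial.eval_finset_sum] at hc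
  simp only [Polynomial.eval_sub, Polynomial.eval_mul, Polynomial.eval_pow, Polynomial.eval_X,
    Polynomial.eval_C] at hc
  rw [pairing n] at hc
  have hterm : ∀ j ∈ Finset.range (2 * n + 1),
      (-1 : R) ^ j * (X : R) ^ (j ^ 2) * qb (2 * n) j * ((X : R) ^ (2 * n)) ^ (2 * n - j) =
      (X : R) ^ (3 * n ^ 2) * ((-1 : R) ^ j * ((X : R) ^ (dist j n ^ 2) * qb (2 * n) j)) := by
    intro j hj
    rw [Finset.mem_range] at hj
    rw [← pow_mul]
    have he : j ^ 2 + 2 * n * (2 * n - j) = 3 * n ^ 2 + dist j n ^ 2 := by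
      rcases le_or_gt j n with h | h
      · rw [show dist j n = n - j by unfold dist; omega]
        zify [h, show j ≤ 2 * n by omega]
        ring
      · rw [show dist j n = j - n by unfold dist; omega]
        zify [le_of_lt h, show j ≤ 2 * n by omega]
        ring
    calc (-1:R) ^ j * (X:R) ^ (j ^ 2) * qb (2*n) j * (X:R) ^ (2 * n * (2 * n - j))
        = (-1:R) ^ j * ((X:R) ^ (j ^ 2) * (X:R) ^ (2 * n * (2 * n - j))) * qb (2*n) j := by ring
      _ = (-1:R) ^ j * (X:R) ^ (3 * n ^ 2 + dist j n ^ 2) * qb (2*n) j := by rw [← pow_add, he]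
      _ = (X:R) ^ (3 * n ^ 2) * ((-1:R) ^ j * ((X:R) ^ (dist j n ^ 2) * qb (2*n) j)) := by
          rw [pow_add]; ring
  rw [Finset.sum_congr rfl hterm, ← Finset.mul_sum] at hc
  have hX : (X : R) ^ (3 * n ^ 2) ≠ 0 := pow_ne_zero _ PowerSeries.X_ne_zero
  have h1 : (-1 : R) ^ n * (-1 : R) ^ n = 1 := by
    rw [← mul_pow]
    norm_num
  have key : (Podd n) ^ 2 = (-1 : R) ^ n *
      ∑ j ∈ Finset.range (2 * n + 1), (-1:R) ^ j * ((X:R) ^ (dist j n ^ 2) * qb (2 * n) j) := by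
    apply mul_left_cancel₀ hX
    calc (X:R) ^ (3 * n ^ 2) * (Podd n) ^ 2
        = ((-1:R) ^ n * (-1:R) ^ n) * ((X:R) ^ (3 * n ^ 2) * (Podd n) ^ 2) := by rw [h1]; ring
      _ = (-1:R) ^ n * ((-1:R) ^ n * (X:R) ^ (3 * n ^ 2) * (Podd n) ^ 2) := by ring
      _ = (-1:R) ^ n * ((X:R) ^ (3 * n ^ 2) *
            ∑ j ∈ Finset.range (2 * n + 1), (-1:R) ^ j * ((X:R) ^ (dist j n ^ 2) * qb (2*n) j)) := by
          rw [hc]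
      _ = (X:R) ^ (3 * n ^ 2) * ((-1:R) ^ n *
            ∑ j ∈ Finset.range (2 * n + 1), (-1:R) ^ j * ((X:R) ^ (dist j n ^ 2) * qb (2*n) j)) := by
          ring
  rw [key, Finset.mul_sum]
  refine Finset.sum_congr rfl fun j _ => ?_
  rw [pow_add]
  ring


lemma constCoeff_P {d : ℕ} (hd : 1 ≤ d) (N : ℕ) : constantCoeff (P d N) = 1 := by
  rw [P, map_prod]
  refine Finset.prod_eq_one fun m _ => ?_
  rw [map_sub, map_one, map_pow, constantCoeff_X, zero_pow (by positivity), sub_zero]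

lemma P_ne_zero {d : ℕ} (hd : 1 ≤ d) (N : ℕ) : P d N ≠ 0 := fun h => by
  have := constCoeff_P hd N
  rw [h, map_zero] at this
  exact zero_ne_one this

lemma P_split {d : ℕ} {a b : ℕ} (hab : a ≤ b) :
    P d b = P d a * ∏ k ∈ Finset.Ico a b, (1 - (X : R) ^ (d * (k + 1))) := by
  rw [P, P, Finset.range_eq_Ico, Finset.range_eq_Ico]
  exact (Finset.prod_Ico_consecutive (fun k => (1 - (X : R) ^ (d * (k + 1)))) (Nat.zero_le a) hab).symm

/-- `Podd n * (q²;q²)_n = (q;q)_{2n}` -/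
lemma Podd_mul (n : ℕ) : Podd n * P 2 n = P 1 (2 * n) := by
  induction n with
  | zero => simp [Podd, P]
  | succ n ih =>
    rw [show 2 * (n + 1) = (2 * n + 1) + 1 by omega, P_succ 1 (2 * n + 1), P_succ 1 (2 * n),
      ← ih, Podd, Finset.prod_range_succ, ← Podd, P_succ 2 n]
    rw [show 1 * (2 * n + 1 + 1) = 2 * (n + 1) by omega,
      show 1 * (2 * n + 1) = 2 * n + 1 by omega]
    ring

/-- the congruence `(q²;q²)_n [2n,j]_{q²} ≡ 1 mod X^{2(n-|j-n|)+2}` -/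
lemma qb_cong {n j : ℕ} (hj : j ≤ 2 * n) :
    MD (2 * (n - dist j n) + 2) (P 2 n * qb (2 * n) j) 1 := by
  have h2 : (0:ℤ) ≠ 1 := zero_ne_one
  rcases le_or_gt j n with h | h
  · have hd : dist j n = n - j := by unfold dist; omega
    have hq := qb_dagger (2 * n) j hj
    have hB : P 2 (2 * n) = P 2 (2 * n - j) *
        ∏ k ∈ Finset.Ico (2 * n - j) (2 * n), (1 - (X : R) ^ (2 * (k + 1))) :=
      P_split (by omega)
    have hPj : P 2 j * qb (2 * n) j =
        ∏ k ∈ Finset.Ico (2 * n - j) (2 * n), (1 - (X : R) ^ (2 * (k + 1))) := by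
      apply mul_left_cancel₀ (P_ne_zero (d := 2) one_le_two (2 * n - j))
      calc P 2 (2*n-j) * (P 2 j * qb (2*n) j) = P 2 j * P 2 (2*n - j) * qb (2*n) j := by ring
        _ = P 2 (2 * n) := hq
        _ = _ := hB
    have hPn : P 2 n * qb (2 * n) j =
        (∏ k ∈ Finset.Ico j n, (1 - (X : R) ^ (2 * (k + 1)))) *
        ∏ k ∈ Finset.Ico (2 * n - j) (2 * n), (1 - (X : R) ^ (2 * (k + 1))) := by
      calc P 2 n * qb (2 * n) j
          = (P 2 j * ∏ k ∈ Finset.Ico j n, (1 - (X : R) ^ (2 * (k + 1)))) * qb (2 * n) j := by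
            rw [← P_split h]
        _ = (∏ k ∈ Finset.Ico j n, (1 - (X : R) ^ (2 * (k + 1)))) * (P 2 j * qb (2 * n) j) := by
            ring
        _ = _ := by rw [hPj]
    rw [hPn, hd]
    have m1 := MD_prod_one (K := 2 * (n - (n - j)) + 2) (Finset.Ico j n)
      (fun k => 2 * (k + 1)) (fun k hk => by
        rw [Finset.mem_Ico] at hk
        show _ ≤ 2 * (k + 1)
        omega)
    have m2 := MD_prod_one (K := 2 * (n - (n - j)) + 2) (Finset.Ico (2 * n - j) (2 * n))
      (fun k => 2 * (k + 1)) (fun k hk => by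
        rw [Finset.mem_Ico] at hk
        show _ ≤ 2 * (k + 1)
        omega)
    simpa using m1.mul m2
  · have hd : dist j n = j - n := by unfold dist; omega
    have hq := qb_dagger (2 * n) j hj
    have hB : P 2 (2 * n) = P 2 j *
        ∏ k ∈ Finset.Ico j (2 * n), (1 - (X : R) ^ (2 * (k + 1))) := P_split hj
    have hPj : P 2 (2 * n - j) * qb (2 * n) j =
        ∏ k ∈ Finset.Ico j (2 * n), (1 - (X : R) ^ (2 * (k + 1))) := by
      apply mul_left_cancel₀ (P_ne_zero (d := 2) one_le_two j)
      calc P 2 j * (P 2 (2*n-j) * qb (2*n) j) = P 2 j * P 2 (2*n - j) * qb (2*n) j := by ring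
        _ = P 2 (2 * n) := hq
        _ = _ := hB
    have hPn : P 2 n * qb (2 * n) j =
        (∏ k ∈ Finset.Ico (2 * n - j) n, (1 - (X : R) ^ (2 * (k + 1)))) *
        ∏ k ∈ Finset.Ico j (2 * n), (1 - (X : R) ^ (2 * (k + 1))) := by
      calc P 2 n * qb (2 * n) j
          = (P 2 (2 * n - j) * ∏ k ∈ Finset.Ico (2 * n - j) n, (1 - (X : R) ^ (2 * (k + 1)))) *
              qb (2 * n) j := by rw [← P_split (show 2 * n - j ≤ n by omega)]
        _ = (∏ k ∈ Finset.Ico (2 * n - j) n, (1 - (X : R) ^ (2 * (k + 1)))) *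
              (P 2 (2 * n - j) * qb (2 * n) j) := by ring
        _ = _ := by rw [hPj]
    rw [hPn, hd]
    have m1 := MD_prod_one (K := 2 * (n - (j - n)) + 2) (Finset.Ico (2 * n - j) n)
      (fun k => 2 * (k + 1)) (fun k hk => by
        rw [Finset.mem_Ico] at hk
        show _ ≤ 2 * (k + 1)
        omega)
    have m2 := MD_prod_one (K := 2 * (n - (j - n)) + 2) (Finset.Ico j (2 * n))
      (fun k => 2 * (k + 1)) (fun k hk => by
        rw [Finset.mem_Ico] at hk
        show _ ≤ 2 * (k + 1)
        omega)
    simpa using m1.mul m2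

lemma neg_one_pow_eq {a b : ℕ} (h : Even (a + b)) : ((-1 : ℤ)) ^ a = (-1) ^ b := by
  have h2 : (-1 : ℤ) ^ b * (-1) ^ b = 1 := by
    rw [← pow_add]
    exact Even.neg_one_pow ⟨b, rfl⟩
  calc (-1 : ℤ) ^ a = (-1) ^ a * ((-1) ^ b * (-1) ^ b) := by rw [h2, mul_one]
    _ = ((-1) ^ (a + b)) * (-1) ^ b := by rw [pow_add]; ring
    _ = (-1) ^ b := by rw [h.neg_one_pow, one_mul]

/-- the theta series `φ(-q) = ∑_{i∈ℤ} (-1)^i q^{i²}` -/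
noncomputable def G : R := PowerSeries.mk fun m =>
  if m.sqrt ^ 2 = m then (if m = 0 then 1 else 2 * (-1 : ℤ) ^ m.sqrt) else 0

/-- truncated theta -/
noncomputable def Th (n : ℕ) : R :=
  ∑ j ∈ Finset.range (2 * n + 1), (-1 : R) ^ (j + n) * (X : R) ^ (dist j n ^ 2)

lemma sq_inj {a s : ℕ} (h : a ^ 2 = s ^ 2) : a = s :=
  Nat.pow_left_injective two_ne_zero h

lemma coeff_Th {m n : ℕ} (hm : m ≤ n) : coeff m (Th n) = coeff m G := by
  rw [Th, map_sum, G, coeff_mk]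
  have hterm : ∀ j ∈ Finset.range (2 * n + 1),
      coeff m ((-1 : R) ^ (j + n) * (X : R) ^ (dist j n ^ 2)) =
      if m = dist j n ^ 2 then (-1 : ℤ) ^ (j + n) else 0 := by
    intro j _
    rw [show ((-1 : R)) = C (-1) by simp, ← map_pow, coeff_C_mul, coeff_X_pow]
    split <;> ring
  rw [Finset.sum_congr rfl hterm]
  have hfilter : ∀ s : Finset ℕ, ∀ F : ℕ → ℤ,
      (∑ j ∈ s, if m = dist j n ^ 2 then F j else 0) =
      ∑ j ∈ s.filter (fun j => m = dist j n ^ 2), F j := fun s F =>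
    (Finset.sum_filter (fun j => m = dist j n ^ 2) F).symm
  rw [hfilter]
  by_cases hsq : m.sqrt ^ 2 = m
  · set s := m.sqrt with hs
    have hsn : s ≤ n := le_trans (Nat.sqrt_le_self m) hm
    have hmem : ∀ j, (m = dist j n ^ 2) ↔ (j = n - s ∨ j = n + s) := by
      intro j
      constructor
      · intro h
        have : dist j n = s := sq_inj (by omega)
        unfold dist at this
        omega
      · intro h
        have : dist j n = s := by unfold dist; omega
        rw [this, hsq]
    by_cases hm0 : m = 0
    · have hs0 : s = 0 := by rw [hs, hm0, Nat.sqrt_zero]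
      have hfe : (Finset.range (2 * n + 1)).filter (fun j => m = dist j n ^ 2) = {n} := by
        ext j
        rw [Finset.mem_filter, Finset.mem_range, hmem j, Finset.mem_singleton]
        omega
      rw [hfe, Finset.sum_singleton, if_pos hsq, if_pos hm0]
      exact Even.neg_one_pow ⟨n, rfl⟩
    · have hs0 : s ≠ 0 := fun h => hm0 (by rw [← hsq, h]; rfl)
      have hfe : (Finset.range (2 * n + 1)).filter (fun j => m = dist j n ^ 2) =
          {n - s, n + s} := by
        ext j
        rw [Finset.mem_filter, Finset.mem_range, hmem j, Finset.mem_insert, Finset.mem_singleton]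
        omega
      rw [hfe, Finset.sum_pair (show n - s ≠ n + s by omega), if_pos hsq, if_neg hm0]
      rw [neg_one_pow_eq (a := (n - s) + n) (b := s) ⟨n, by omega⟩,
        neg_one_pow_eq (a := (n + s) + n) (b := s) ⟨n + s, by omega⟩]
      ring
  · have hfe : (Finset.range (2 * n + 1)).filter (fun j => m = dist j n ^ 2) = ∅ := by
      ext j
      simp only [Finset.mem_filter, Finset.mem_range, Finset.notMem_empty, iff_false, not_and]
      intro _ h
      refine absurd ?_ hsq
      rw [h, show dist j n ^ 2 = dist j n * dist j n by ring, Nat.sqrt_eq (dist j n),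
        show dist j n ^ 2 = dist j n * dist j n by ring]
    rw [hfe, Finset.sum_empty, if_neg hsq]
lemma MD.X_pow_mul {K : ℕ} {f g : R} (h : MD K f g) (e : ℕ) :
    MD (e + K) ((X : R) ^ e * f) ((X : R) ^ e * g) := by
  rw [MD, show (X:R)^e * f - (X:R)^e * g = (X:R)^e * (f - g) by ring, pow_add]
  exact mul_dvd_mul_left _ h

lemma MD_Th {K n : ℕ} (hK : K ≤ n + 1) : MD K (Th n) G := by
  rw [MD, X_pow_dvd_iff]
  intro m hm
  rw [map_sub, sub_eq_zero]
  exact coeff_Th (by omega)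

/-- Gauss's identity `(q;q)_∞² = (q²;q²)_∞ · φ(-q)` -/
lemma gauss : pochE 1 ^ 2 = pochE 2 * G := by
  apply MD.ext
  intro K
  set n := K + 1 with hn
  have h1 : MD K (pochE 1 ^ 2) (P 1 (2 * n) ^ 2) := (MD_pochE le_rfl (by omega)).pow 2
  have h2 : P 1 (2 * n) ^ 2 =
      ((∑ j ∈ Finset.range (2 * n + 1),
        (-1 : R) ^ (j + n) * ((X : R) ^ (dist j n ^ 2) * qb (2 * n) j)) * P 2 n) * P 2 n := by
    rw [← Podd_mul, mul_pow, gauss_finite n]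
    ring
  have h3 : MD K ((∑ j ∈ Finset.range (2 * n + 1),
      (-1 : R) ^ (j + n) * ((X : R) ^ (dist j n ^ 2) * qb (2 * n) j)) * P 2 n) (Th n) := by
    rw [Finset.sum_mul, Th]
    refine MD.sum _ _ _ fun j hj => ?_
    rw [Finset.mem_range] at hj
    have hdn : dist j n ≤ n := by unfold dist; omega
    have hc : MD (dist j n ^ 2 + (2 * (n - dist j n) + 2))
        ((X : R) ^ (dist j n ^ 2) * (P 2 n * qb (2 * n) j)) ((X : R) ^ (dist j n ^ 2) * 1) :=
      (qb_cong (by omega)).X_pow_mul _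
    have hKle : K ≤ dist j n ^ 2 + (2 * (n - dist j n) + 2) := by
      zify [hdn]
      have hnn : (n : ℤ) = (K : ℤ) + 1 := by exact_mod_cast hn
      nlinarith [sq_nonneg ((dist j n : ℤ) - 1)]
    have := (MD.refl ((-1 : R) ^ (j + n))).mul (hc.mono hKle)
    refine MD.trans (MD.of_eq (by ring)) (MD.trans this (MD.of_eq (by ring)))
  have h5 : MD K (P 2 n) (pochE 2) := (MD_pochE one_le_two (by omega)).symm
  have h4 : MD K (Th n) G := MD_Th (by omega)
  refine (h1.trans (MD.of_eq h2)).trans ?_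
  refine ((h3.mul h5).trans ((h4.mul (MD.refl (pochE 2))).trans (MD.of_eq (by ring))))

/-! ### the substitution `q ↦ q²` as a ring hom -/

noncomputable def Dfun (f : R) : R :=
  PowerSeries.mk fun n => if Even n then coeff (n / 2) f else 0

lemma coeff_Dfun_even (f : R) (m : ℕ) : coeff (2 * m) (Dfun f) = coeff m f := by
  have h2 : 2 * m / 2 = m := by omega
  rw [Dfun, coeff_mk, if_pos (even_two_mul m), h2]

lemma coeff_Dfun_odd (f : R) {n : ℕ} (h : ¬ Even n) : coeff n (Dfun f) = 0 := by
  rw [Dfun, coeff_mk, if_neg h]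

lemma Dfun_mul (f g : R) : Dfun (f * g) = Dfun f * Dfun g := by
  ext n
  rcases Nat.even_or_odd n with he | ho
  · obtain ⟨m, hm⟩ := he
    have hn : n = 2 * m := by omega
    subst hn
    rw [coeff_Dfun_even, coeff_mul, coeff_mul]
    have hinj : ∀ p ∈ Finset.HasAntidiagonal.antidiagonal m, ∀ q ∈ Finset.HasAntidiagonal.antidiagonal m,
        (fun p : ℕ × ℕ => (2 * p.1, 2 * p.2)) p = (fun p : ℕ × ℕ => (2 * p.1, 2 * p.2)) q →
        p = q := by
      intro p _ q _ h
      simp only [Prod.mk.injEq] at h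
      exact Prod.ext (by omega) (by omega)
    have step1 : (∑ p ∈ Finset.HasAntidiagonal.antidiagonal m, coeff p.1 f * coeff p.2 g) =
        ∑ p ∈ (Finset.HasAntidiagonal.antidiagonal m).image (fun p : ℕ × ℕ => (2 * p.1, 2 * p.2)),
          coeff p.1 (Dfun f) * coeff p.2 (Dfun g) := by
      rw [Finset.sum_image hinj]
      refine Finset.sum_congr rfl fun p _ => ?_
      show coeff p.1 f * coeff p.2 g = coeff (2 * p.1) (Dfun f) * coeff (2 * p.2) (Dfun g)
      rw [coeff_Dfun_even, coeff_Dfun_even]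
    rw [step1]
    refine Finset.sum_subset ?_ ?_
    · intro x hx
      simp only [Finset.mem_image, Finset.HasAntidiagonal.mem_antidiagonal] at hx ⊢
      obtain ⟨p, hp, rfl⟩ := hx
      omega
    · intro x hx hnx
      rw [Finset.HasAntidiagonal.mem_antidiagonal] at hx
      rcases Nat.even_or_odd x.1 with ⟨a, ha⟩ | ho1
      · rcases Nat.even_or_odd x.2 with ⟨b, hb⟩ | ho2
        · exfalso
          apply hnx
          simp only [Finset.mem_image, Finset.HasAntidiagonal.mem_antidiagonal]
          exact ⟨(a, b), by omega, by
            rcases x with ⟨x1, x2⟩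
            simp only [Prod.mk.injEq]
            constructor <;> omega⟩
        · rw [coeff_Dfun_odd g (Nat.not_even_iff_odd.mpr ho2), mul_zero]
      · rw [coeff_Dfun_odd f (Nat.not_even_iff_odd.mpr ho1), zero_mul]
  · rw [coeff_Dfun_odd _ (Nat.not_even_iff_odd.mpr ho), coeff_mul]
    refine (Finset.sum_eq_zero fun p hp => ?_).symm
    rw [Finset.HasAntidiagonal.mem_antidiagonal] at hp
    rcases Nat.even_or_odd p.1 with he1 | ho1
    · have h2 : ¬ Even p.2 := by
        obtain ⟨a, ha⟩ := he1
        obtain ⟨b, hb⟩ := ho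
        rintro ⟨c, hc⟩
        omega
      rw [coeff_Dfun_odd g h2, mul_zero]
    · rw [coeff_Dfun_odd f (Nat.not_even_iff_odd.mpr ho1), zero_mul]

lemma Dfun_one : Dfun 1 = 1 := by
  ext n
  rcases Nat.even_or_odd n with he | ho
  · obtain ⟨m, hm⟩ := he
    have hn : n = 2 * m := by omega
    subst hn
    rw [coeff_Dfun_even, coeff_one, coeff_one]
    by_cases h : m = 0
    · simp [h]
    · rw [if_neg h, if_neg (by omega)]
  · rw [coeff_Dfun_odd _ (Nat.not_even_iff_odd.mpr ho), coeff_one,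
      if_neg (by obtain ⟨b, hb⟩ := ho; omega)]

lemma Dfun_add (f g : R) : Dfun (f + g) = Dfun f + Dfun g := by
  ext n
  simp only [Dfun, coeff_mk, map_add]
  split_ifs <;> simp

/-- the ring hom `f(q) ↦ f(q²)` -/
noncomputable def D : R →+* R :=
  { toFun := Dfun, map_one' := Dfun_one, map_mul' := Dfun_mul,
    map_zero' := by
      ext n
      simp only [Dfun, coeff_mk, map_zero]
      split_ifs <;> simp,
    map_add' := Dfun_add }

lemma coeff_D_even (f : R) (m : ℕ) : coeff (2 * m) (D f) = coeff m f :=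
  coeff_Dfun_even f m

lemma coeff_D_odd (f : R) {n : ℕ} (h : ¬ Even n) : coeff n (D f) = 0 :=
  coeff_Dfun_odd f h

lemma D_inj : Function.Injective D := by
  intro a b h
  ext n
  rw [← coeff_D_even a n, ← coeff_D_even b n, h]

lemma D_X_pow (k : ℕ) : D ((X : R) ^ k) = (X : R) ^ (2 * k) := by
  ext n
  rcases Nat.even_or_odd n with he | ho
  · obtain ⟨m, hm⟩ := he
    have hn : n = 2 * m := by omega
    subst hn
    rw [coeff_D_even, coeff_X_pow, coeff_X_pow]
    exact if_congr (by omega) rfl rfl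
  · rw [coeff_D_odd _ (Nat.not_even_iff_odd.mpr ho), coeff_X_pow,
      if_neg (by obtain ⟨b, hb⟩ := ho; omega)]

lemma D_P (d N : ℕ) : D (P d N) = P (2 * d) N := by
  rw [P, P, map_prod]
  refine Finset.prod_congr rfl fun m _ => ?_
  rw [map_sub, map_one, D_X_pow]
  congr 2
  ring

lemma MD.D {K : ℕ} {f g : R} (h : MD K f g) : MD K (OPP.D f) (OPP.D g) := by
  obtain ⟨c, hc⟩ := h
  rw [MD, ← map_sub, hc, map_mul, D_X_pow]
  exact Dvd.dvd.mul_right (pow_dvd_pow _ (by omega)) _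

lemma D_pochE {d : ℕ} (hd : 1 ≤ d) : D (pochE d) = pochE (2 * d) := by
  apply MD.ext
  intro K
  exact ((MD_pochE hd le_rfl).D.trans (MD.of_eq (D_P d K))).trans (MD_pochE (by omega) le_rfl).symm

/-! ### rescale facts -/

lemma MD.sigma {K : ℕ} {f g : R} (h : MD K f g) :
    MD K (rescale (-1 : ℤ) f) (rescale (-1 : ℤ) g) := by
  obtain ⟨c, hc⟩ := h
  rw [MD, ← map_sub, hc, map_mul, map_pow, rescale_X, mul_pow]
  exact Dvd.dvd.mul_right (Dvd.dvd.mul_left dvd_rfl _) _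

lemma sigma_sigma (f : R) : rescale (-1 : ℤ) (rescale (-1 : ℤ) f) = f := by
  ext n
  rw [coeff_rescale, coeff_rescale, ← mul_assoc, ← mul_pow]
  norm_num

lemma sigma_D (f : R) : rescale (-1 : ℤ) (D f) = D f := by
  ext n
  rw [coeff_rescale]
  rcases Nat.even_or_odd n with he | ho
  · rw [he.neg_one_pow, one_mul]
  · rw [coeff_D_odd _ (Nat.not_even_iff_odd.mpr ho), mul_zero]

lemma sigma_pochE2 : rescale (-1 : ℤ) (pochE 2) = pochE 2 := by
  rw [show (2 : ℕ) = 2 * 1 from rfl, ← D_pochE le_rfl, sigma_D]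

lemma sigma_pochE4 : rescale (-1 : ℤ) (pochE 4) = pochE 4 := by
  rw [show (4 : ℕ) = 2 * 2 from rfl, ← D_pochE one_le_two, sigma_D]

/-! ### the elementary rearrangement identity `(q;q) (-q;-q) (q⁴;q⁴) = (q²;q²)³` -/

lemma sigma_P1 (N : ℕ) : rescale (-1 : ℤ) (P 1 N) =
    ∏ m ∈ Finset.range N, (1 - (-(X : R)) ^ (m + 1)) := by
  rw [P, map_prod]
  refine Finset.prod_congr rfl fun m _ => ?_
  rw [map_sub, map_one, map_pow, rescale_X]
  congr 2
  · simp
  · omega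

lemma I1 : ∀ N : ℕ, ∏ m ∈ Finset.range (2 * N), ((1 - (X:R) ^ (m+1)) * (1 - (-(X:R)) ^ (m+1))) =
    ∏ k ∈ Finset.range N, ((1 - (X:R) ^ (2*k+2)) ^ 2 * (1 - (X:R) ^ (4*k+2))) := by
  intro N
  induction N with
  | zero => simp
  | succ N ih =>
    rw [show 2 * (N + 1) = (2 * N + 1) + 1 by omega, Finset.prod_range_succ,
      Finset.prod_range_succ, ih, Finset.prod_range_succ]
    have hodd : (-(X:R)) ^ (2 * N + 1) = -((X:R) ^ (2 * N + 1)) := Odd.neg_pow ⟨N, by omega⟩ _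
    have heven : (-(X:R)) ^ (2 * N + 1 + 1) = (X:R) ^ (2 * N + 1 + 1) :=
      Even.neg_pow ⟨N + 1, by omega⟩ _
    rw [hodd, heven]
    have hx : (X:R) ^ (4 * N + 2) = (X:R) ^ (2 * N + 1) * (X:R) ^ (2 * N + 1) := by
      rw [← pow_add]
      congr 1
      omega
    rw [show 2 * N + 1 + 1 = 2 * N + 2 by omega, hx]
    ring

lemma I2 : ∀ N : ℕ, ∏ k ∈ Finset.range N, ((1 - (X:R) ^ (4*k+4)) * (1 - (X:R) ^ (4*k+2))) =
    P 2 (2 * N) := by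
  intro N
  induction N with
  | zero => simp [P]
  | succ N ih =>
    rw [Finset.prod_range_succ, ih, show 2 * (N + 1) = (2 * N + 1) + 1 by omega,
      P_succ, P_succ, show 2 * (2 * N + 1 + 1) = 4 * N + 4 by omega,
      show 2 * (2 * N + 1) = 4 * N + 2 by omega]
    ring

/-- identity (A): `E1 · σE1 · E4 = E2³` -/
lemma identA : pochE 1 * rescale (-1 : ℤ) (pochE 1) * pochE 4 = pochE 2 ^ 3 := by
  apply MD.ext
  intro K
  have h1 : MD K (pochE 1) (P 1 (2 * K)) := MD_pochE le_rfl (by omega)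
  have hs : MD K (rescale (-1 : ℤ) (pochE 1)) (rescale (-1 : ℤ) (P 1 (2 * K))) := h1.sigma
  have h4 : MD K (pochE 4) (P 4 K) := MD_pochE (by norm_num) le_rfl
  have hexact : P 1 (2 * K) * rescale (-1 : ℤ) (P 1 (2 * K)) * P 4 K =
      (P 2 K) ^ 2 * P 2 (2 * K) := by
    have hP1 : P 1 (2 * K) = ∏ m ∈ Finset.range (2 * K), (1 - (X:R) ^ (m + 1)) := by
      rw [P]
      exact Finset.prod_congr rfl fun m _ => by rw [one_mul]
    rw [sigma_P1, hP1, ← Finset.prod_mul_distrib, I1 K]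
    have hsplit : ∏ k ∈ Finset.range K, ((1 - (X:R) ^ (2*k+2)) ^ 2 * (1 - (X:R) ^ (4*k+2))) =
        (∏ k ∈ Finset.range K, (1 - (X:R) ^ (2*k+2))) ^ 2 *
          ∏ k ∈ Finset.range K, (1 - (X:R) ^ (4*k+2)) := by
      rw [← Finset.prod_pow, ← Finset.prod_mul_distrib]
    rw [hsplit]
    have hP2 : ∏ k ∈ Finset.range K, (1 - (X:R) ^ (2*k+2)) = P 2 K := by
      rw [P]
      exact Finset.prod_congr rfl fun k _ => by rw [show 2*(k+1) = 2*k+2 by omega]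
    have hP4 : P 4 K = ∏ k ∈ Finset.range K, (1 - (X:R) ^ (4*k+4)) := by
      rw [P]
      exact Finset.prod_congr rfl fun k _ => by rw [show 4*(k+1) = 4*k+4 by omega]
    rw [hP2, hP4, mul_assoc, mul_comm (∏ k ∈ Finset.range K, (1 - (X:R) ^ (4*k+2))),
      ← Finset.prod_mul_distrib, I2 K]
  have hMD : MD K (pochE 1 * rescale (-1 : ℤ) (pochE 1) * pochE 4) ((P 2 K) ^ 2 * P 2 (2 * K)) :=
    ((h1.mul hs).mul h4).trans (MD.of_eq hexact)
  have h2a : MD K ((P 2 K) ^ 2 * P 2 (2 * K)) (pochE 2 ^ 3) := by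
    have e1 : MD K (P 2 K) (pochE 2) := (MD_pochE one_le_two le_rfl).symm
    have e2 : MD K (P 2 (2 * K)) (pochE 2) := (MD_pochE one_le_two (by omega)).symm
    exact ((e1.pow 2).mul e2).trans (MD.of_eq (by ring))
  exact hMD.trans h2a

/-! ### the theta identity `φ(-q)² + φ(q)² = 2 φ(q²)²` -/

lemma dist_cast (j n : ℕ) : ((dist j n : ℤ)) ^ 2 = ((j : ℤ) - n) ^ 2 := by
  rcases le_total j n with h | h
  · rw [show dist j n = n - j by unfold dist; omega]
    push_cast [h]
    ring
  · rw [show dist j n = j - n by unfold dist; omega]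
    push_cast [h]
    ring

lemma dist_parity (j n : ℕ) : Even (dist j n ^ 2 + (j + n)) := by
  obtain ⟨u, hu⟩ := Nat.even_mul_succ_self (dist j n)
  obtain ⟨v, hv⟩ : Even (dist j n + (j + n)) := ⟨max j n, by unfold dist; omega⟩
  have hd : dist j n * (dist j n + 1) = dist j n ^ 2 + dist j n := by ring
  exact ⟨u + v - dist j n, by omega⟩

lemma sigma_Th (n : ℕ) : rescale (-1 : ℤ) (Th n) =
    ∑ j ∈ Finset.range (2 * n + 1), (X : R) ^ (dist j n ^ 2) := by
  rw [Th, map_sum]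
  refine Finset.sum_congr rfl fun j _ => ?_
  have hC : C (-1 : ℤ) = (-1 : R) := by simp
  rw [map_mul, map_pow, map_pow, rescale_X, hC, map_neg, map_one, mul_pow, ← mul_assoc,
    ← pow_add]
  rw [show (j + n) + dist j n ^ 2 = dist j n ^ 2 + (j + n) by omega,
    Even.neg_one_pow (dist_parity j n), one_mul]

lemma D_sigma_Th (n : ℕ) : D (rescale (-1 : ℤ) (Th n)) =
    ∑ j ∈ Finset.range (2 * n + 1), (X : R) ^ (2 * dist j n ^ 2) := by
  rw [sigma_Th, map_sum]
  exact Finset.sum_congr rfl fun j _ => D_X_pow _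

lemma bound_of_cond {m n a b : ℕ} (hm : m ≤ n)
    (hcond : m = 2 * dist a n ^ 2 + 2 * dist b n ^ 2) : dist a n + dist b n ≤ n := by
  have hz : ((dist a n : ℤ)) + dist b n ≤ n := by
    have hc : (m : ℤ) = 2 * (dist a n : ℤ) ^ 2 + 2 * (dist b n : ℤ) ^ 2 := by
      exact_mod_cast congrArg (Nat.cast : ℕ → ℤ) hcond
    have hmn : (m : ℤ) ≤ n := by exact_mod_cast hm
    nlinarith [sq_nonneg ((dist a n : ℤ) - dist b n), sq_nonneg ((dist a n : ℤ) + dist b n - 1),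
      Int.natCast_nonneg (dist a n), Int.natCast_nonneg (dist b n), Int.natCast_nonneg n]
  exact_mod_cast hz

lemma dist_bounds (a n : ℕ) : a ≤ n + dist a n ∧ n ≤ a + dist a n := by
  unfold dist
  omega

lemma theta_II_coeff (m n : ℕ) (hm : m ≤ n) :
    coeff m ((Th n) ^ 2 + (rescale (-1 : ℤ) (Th n)) ^ 2) =
    coeff m (2 * (D (rescale (-1 : ℤ) (Th n))) ^ 2) := by
  classical
  set s := Finset.range (2 * n + 1) with hsdef
  have cA : coeff m ((Th n) ^ 2) = ∑ j ∈ s, ∑ k ∈ s,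
      (if m = dist j n ^ 2 + dist k n ^ 2 then (-1 : ℤ) ^ (j + k) else 0) := by
    rw [sq, Th, Finset.sum_mul_sum, map_sum]
    refine Finset.sum_congr rfl fun j _ => ?_
    rw [map_sum]
    refine Finset.sum_congr rfl fun k _ => ?_
    have hC : ((-1 : R)) = C (-1) := by simp
    have hsgn : ((-1 : ℤ)) ^ (j + n) * (-1) ^ (k + n) = (-1) ^ (j + k) := by
      rw [← pow_add]
      exact neg_one_pow_eq ⟨j + k + n, by omega⟩
    have ht : ((-1:R) ^ (j+n) * (X:R) ^ (dist j n ^ 2)) *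
        ((-1:R) ^ (k+n) * (X:R) ^ (dist k n ^ 2)) =
        C ((-1) ^ (j + k)) * (X:R) ^ (dist j n ^ 2 + dist k n ^ 2) := by
      rw [hC, ← map_pow, ← map_pow]
      calc (C ((-1:ℤ) ^ (j+n)) * (X:R) ^ (dist j n ^ 2)) *
          (C ((-1:ℤ) ^ (k+n)) * (X:R) ^ (dist k n ^ 2)) =
          (C ((-1:ℤ) ^ (j+n)) * C ((-1:ℤ) ^ (k+n))) *
            ((X:R) ^ (dist j n ^ 2) * (X:R) ^ (dist k n ^ 2)) := by ring
        _ = C ((-1:ℤ) ^ (j + k)) * ((X:R) ^ (dist j n ^ 2) * (X:R) ^ (dist k n ^ 2)) := by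
            rw [← map_mul, hsgn]
        _ = _ := by rw [← pow_add]
    rw [ht, coeff_C_mul, coeff_X_pow, mul_ite, mul_one, mul_zero]
  have cB : coeff m ((rescale (-1 : ℤ) (Th n)) ^ 2) = ∑ j ∈ s, ∑ k ∈ s,
      (if m = dist j n ^ 2 + dist k n ^ 2 then (1 : ℤ) else 0) := by
    rw [sq, sigma_Th, Finset.sum_mul_sum, map_sum]
    refine Finset.sum_congr rfl fun j _ => ?_
    rw [map_sum]
    refine Finset.sum_congr rfl fun k _ => ?_
    rw [← pow_add, coeff_X_pow]
  have cC : coeff m (2 * (D (rescale (-1 : ℤ) (Th n))) ^ 2) = ∑ j ∈ s, ∑ k ∈ s,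
      (if m = 2 * dist j n ^ 2 + 2 * dist k n ^ 2 then (2 : ℤ) else 0) := by
    rw [show (2 : R) = C 2 by simp, coeff_C_mul, sq, D_sigma_Th, Finset.sum_mul_sum, map_sum,
      Finset.mul_sum]
    refine Finset.sum_congr rfl fun j _ => ?_
    rw [map_sum, Finset.mul_sum]
    refine Finset.sum_congr rfl fun k _ => ?_
    rw [← pow_add, coeff_X_pow, mul_ite, mul_one, mul_zero]
  rw [map_add, cA, cB, cC, ← Finset.sum_add_distrib]
  have merge : ∀ j ∈ s, ((∑ k ∈ s,
        (if m = dist j n ^ 2 + dist k n ^ 2 then (-1 : ℤ) ^ (j + k) else 0)) +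
      (∑ k ∈ s, (if m = dist j n ^ 2 + dist k n ^ 2 then (1 : ℤ) else 0))) =
      ∑ k ∈ s, (if m = dist j n ^ 2 + dist k n ^ 2 then (-1 : ℤ) ^ (j + k) + 1 else 0) := by
    intro j _
    rw [← Finset.sum_add_distrib]
    refine Finset.sum_congr rfl fun k _ => ?_
    split_ifs <;> simp
  rw [Finset.sum_congr rfl merge,
    ← Finset.sum_product' s s
      (fun j k => if m = dist j n ^ 2 + dist k n ^ 2 then (-1 : ℤ) ^ (j + k) + 1 else 0),
    ← Finset.sum_product' s s
      (fun j k => if m = 2 * dist j n ^ 2 + 2 * dist k n ^ 2 then (2 : ℤ) else 0),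
    ← Finset.sum_filter, ← Finset.sum_filter,
    ← Finset.sum_filter_add_sum_filter_not
      ((s ×ˢ s).filter fun p => m = dist p.1 n ^ 2 + dist p.2 n ^ 2)
      (fun p => Even (p.1 + p.2))]
  have hodd : (∑ p ∈ (((s ×ˢ s).filter fun p => m = dist p.1 n ^ 2 + dist p.2 n ^ 2).filter
      fun p => ¬ Even (p.1 + p.2)), ((-1 : ℤ) ^ (p.1 + p.2) + 1)) = 0 := by
    refine Finset.sum_eq_zero fun p hp => ?_
    rw [Finset.mem_filter] at hp
    rw [Odd.neg_one_pow (Nat.not_even_iff_odd.mp hp.2)]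
    ring
  have heven : (∑ p ∈ (((s ×ˢ s).filter fun p => m = dist p.1 n ^ 2 + dist p.2 n ^ 2).filter
      fun p => Even (p.1 + p.2)), ((-1 : ℤ) ^ (p.1 + p.2) + 1)) =
      ∑ p ∈ (((s ×ˢ s).filter fun p => m = dist p.1 n ^ 2 + dist p.2 n ^ 2).filter
      fun p => Even (p.1 + p.2)), (2 : ℤ) := by
    refine Finset.sum_congr rfl fun p hp => ?_
    rw [Finset.mem_filter] at hp
    rw [Even.neg_one_pow hp.2]
    norm_num
  rw [hodd, add_zero, heven]
  refine Finset.sum_nbij' (fun p : ℕ × ℕ => ((p.1 + p.2) / 2, (p.1 + 2 * n - p.2) / 2))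
    (fun q : ℕ × ℕ => (q.1 + q.2 - n, q.1 + n - q.2)) ?_ ?_ ?_ ?_ (fun _ _ => rfl)
  · -- forward membership
    rintro ⟨j, k⟩ hp
    simp only [Finset.mem_filter, Finset.mem_product, hsdef, Finset.mem_range] at hp ⊢
    obtain ⟨⟨⟨hj, hk⟩, hcond⟩, hpar⟩ := hp
    obtain ⟨t, ht⟩ := hpar
    refine ⟨⟨by omega, by omega⟩, ?_⟩
    have hu : ((j + k) / 2) * 2 = j + k := by omega
    have hv : ((j + 2 * n - k) / 2) * 2 = j + 2 * n - k := by omega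
    have e1 : 2 * (((j + k) / 2 : ℕ) : ℤ) - 2 * n = ((j:ℤ) - n) + ((k:ℤ) - n) := by
      have h' : (((j + k) / 2 : ℕ) : ℤ) * 2 = (j : ℤ) + k := by exact_mod_cast congrArg (Nat.cast : ℕ → ℤ) hu
      linarith
    have e2 : 2 * (((j + 2 * n - k) / 2 : ℕ) : ℤ) - 2 * n = ((j:ℤ) - n) - ((k:ℤ) - n) := by
      have hc : ((j + 2 * n - k : ℕ) : ℤ) = (j : ℤ) + 2 * n - k := by
        push_cast [show k ≤ j + 2 * n by omega]
        ring
      have h' : (((j + 2 * n - k) / 2 : ℕ) : ℤ) * 2 = ((j + 2 * n - k : ℕ) : ℤ) := by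
        exact_mod_cast congrArg (Nat.cast : ℕ → ℤ) hv
      rw [hc] at h'
      linarith
    have hmz : (m : ℤ) = ((j:ℤ) - n) ^ 2 + ((k:ℤ) - n) ^ 2 := by
      have h' := congrArg (Nat.cast : ℕ → ℤ) hcond
      push_cast at h'
      rw [dist_cast, dist_cast] at h'
      exact h'
    have q1 : (((j:ℤ) - n) + ((k:ℤ) - n)) ^ 2 = (2 * (((j + k) / 2 : ℕ) : ℤ) - 2 * n) ^ 2 := by
      rw [e1]
    have q2 : (((j:ℤ) - n) - ((k:ℤ) - n)) ^ 2 =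
        (2 * (((j + 2 * n - k) / 2 : ℕ) : ℤ) - 2 * n) ^ 2 := by
      rw [e2]
    have h4 : 4 * (m:ℤ) = 4 * (2 * ((((j + k) / 2 : ℕ) : ℤ) - n) ^ 2 +
        2 * ((((j + 2 * n - k) / 2 : ℕ) : ℤ) - n) ^ 2) := by
      linear_combination 4 * hmz + 2 * q1 + 2 * q2
    have hz : (m:ℤ) = 2 * ((dist ((j + k) / 2) n : ℤ)) ^ 2 +
        2 * ((dist ((j + 2 * n - k) / 2) n : ℤ)) ^ 2 := by
      rw [dist_cast, dist_cast]
      linarith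
    exact_mod_cast hz
  · -- backward membership
    rintro ⟨a, b⟩ hq
    simp only [Finset.mem_filter, Finset.mem_product, hsdef, Finset.mem_range] at hq ⊢
    obtain ⟨⟨ha, hb⟩, hcond⟩ := hq
    have hsum : dist a n + dist b n ≤ n := bound_of_cond hm hcond
    obtain ⟨hab1, hab2⟩ := dist_bounds a n
    obtain ⟨hbb1, hbb2⟩ := dist_bounds b n
    refine ⟨⟨⟨by omega, by omega⟩, ?_⟩, ⟨a, by omega⟩⟩
    have hA' : ((a + b - n : ℕ) : ℤ) - n = ((a:ℤ) - n) + ((b:ℤ) - n) := by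
      push_cast [show n ≤ a + b by omega]
      ring
    have hB' : ((a + n - b : ℕ) : ℤ) - n = ((a:ℤ) - n) - ((b:ℤ) - n) := by
      push_cast [show b ≤ a + n by omega]
      ring
    have hcz : (m : ℤ) = 2 * ((a:ℤ) - n) ^ 2 + 2 * ((b:ℤ) - n) ^ 2 := by
      have h' := congrArg (Nat.cast : ℕ → ℤ) hcond
      push_cast at h'
      rw [dist_cast, dist_cast] at h'
      exact h'
    have hz : (m : ℤ) = ((dist (a + b - n) n : ℤ)) ^ 2 + ((dist (a + n - b) n : ℤ)) ^ 2 := by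
      rw [dist_cast, dist_cast, hA', hB']
      linear_combination hcz
    exact_mod_cast hz
  · -- left inverse
    rintro ⟨j, k⟩ hp
    simp only [Finset.mem_filter, Finset.mem_product, hsdef, Finset.mem_range] at hp
    obtain ⟨⟨⟨hj, hk⟩, _⟩, hpar⟩ := hp
    obtain ⟨t, ht⟩ := hpar
    simp only [Prod.mk.injEq]
    constructor <;> omega
  · -- right inverse
    rintro ⟨a, b⟩ hq
    simp only [Finset.mem_filter, Finset.mem_product, hsdef, Finset.mem_range] at hq
    obtain ⟨⟨ha, hb⟩, hcond⟩ := hq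
    have hsum : dist a n + dist b n ≤ n := bound_of_cond hm hcond
    obtain ⟨hab1, hab2⟩ := dist_bounds a n
    obtain ⟨hbb1, hbb2⟩ := dist_bounds b n
    simp only [Prod.mk.injEq]
    constructor <;> omega

/-- `φ(-q)² + φ(q)² = 2 φ(q²)²` -/
lemma theta_II : G ^ 2 + (rescale (-1 : ℤ) G) ^ 2 = 2 * (D (rescale (-1 : ℤ) G)) ^ 2 := by
  apply MD.ext
  intro K
  have hG : MD K G (Th K) := (MD_Th (by omega)).symm
  have hL : MD K (G ^ 2 + (rescale (-1 : ℤ) G) ^ 2)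
      ((Th K) ^ 2 + (rescale (-1 : ℤ) (Th K)) ^ 2) := (hG.pow 2).add (hG.sigma.pow 2)
  have hR : MD K (2 * (D (rescale (-1 : ℤ) (Th K))) ^ 2) (2 * (D (rescale (-1 : ℤ) G)) ^ 2) :=
    (MD.refl 2).mul ((hG.sigma.D.pow 2).symm)
  have hmid : MD K ((Th K) ^ 2 + (rescale (-1 : ℤ) (Th K)) ^ 2)
      (2 * (D (rescale (-1 : ℤ) (Th K))) ^ 2) := by
    rw [MD, X_pow_dvd_iff]
    intro m hmK
    rw [map_sub, sub_eq_zero]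
    exact theta_II_coeff m K (by omega)
  exact (hL.trans hmid).trans hR

/-! ### assembly -/

lemma constCoeff_pochE {d : ℕ} (hd : 1 ≤ d) : constantCoeff (pochE d) = 1 := by
  have h := (MD_pochE hd (le_refl 1)).coeff_eq (show 0 < 1 by omega)
  rw [← coeff_zero_eq_constantCoeff, h, coeff_zero_eq_constantCoeff, constCoeff_P hd]

lemma pochE_ne_zero {d : ℕ} (hd : 1 ≤ d) : pochE d ≠ 0 := fun h => by
  have := constCoeff_pochE hd
  rw [h, map_zero] at this
  exact zero_ne_one this

lemma D_E1 : D (pochE 1) = pochE 2 := by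
  rw [D_pochE le_rfl]

lemma D_E2 : D (pochE 2) = pochE 4 := by
  rw [D_pochE one_le_two]
  norm_num

lemma D_E4 : D (pochE 4) = pochE 8 := by
  rw [D_pochE (by norm_num : (1:ℕ) ≤ 4)]

lemma two_ne_zero_R : (2 : R) ≠ 0 := by
  intro h
  have h2 := congrArg (constantCoeff) h
  rw [show (2:R) = C 2 by simp, constantCoeff_C, map_zero] at h2
  norm_num at h2

end OPP

open OPP PowerSeries in
/-- If `bb` is the overcubic partition pair function, i.e. the sequence whose generating
function is `∑ bb(n) qⁿ = (q⁴;q⁴)_∞² / ((q;q)_∞⁴ (q²;q²)_∞²)`, then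
`∑ bb(2n) qⁿ = (q²;q²)_∞¹⁶ / ((q;q)_∞¹⁶ (q⁴;q⁴)_∞⁴)` as formal power series over ℤ.
(The divisor series has constant term 1, hence is invertible; its inverse is
`PowerSeries.invOfUnit _ 1`.) -/
theorem overcubic_partition_pair_even_genfun (bb : ℕ → ℤ)
    (hbb : PowerSeries.mk bb * ((pochE 1) ^ 4 * (pochE 2) ^ 2) = (pochE 4) ^ 2) :
    PowerSeries.mk (fun n => bb (2 * n)) =
      (pochE 2) ^ 16 * PowerSeries.invOfUnit ((pochE 1) ^ 16 * (pochE 4) ^ 4) 1 := by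
  classical
  set f : R := PowerSeries.mk bb with hf
  set σ : R →+* R := rescale (-1 : ℤ) with hσ
  -- (E1 σE1 E4)⁴ = E2¹²
  have h12 : pochE 2 ^ 12 = pochE 1 ^ 4 * (σ (pochE 1)) ^ 4 * pochE 4 ^ 4 := by
    have h := congrArg (fun x : R => x ^ 4) identA
    calc pochE 2 ^ 12 = (pochE 2 ^ 3) ^ 4 := by ring
      _ = (pochE 1 * σ (pochE 1) * pochE 4) ^ 4 := by rw [h]
      _ = _ := by ring
  have step1 : f * pochE 2 ^ 14 = pochE 4 ^ 6 * (σ (pochE 1)) ^ 4 := by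
    calc f * pochE 2 ^ 14
        = (f * (pochE 1 ^ 4 * pochE 2 ^ 2)) * ((σ (pochE 1)) ^ 4 * pochE 4 ^ 4) := by
          rw [show pochE 2 ^ 14 = pochE 2 ^ 2 * pochE 2 ^ 12 by ring, h12]
          ring
      _ = pochE 4 ^ 2 * ((σ (pochE 1)) ^ 4 * pochE 4 ^ 4) := by rw [hbb]
      _ = _ := by ring
  have step2 : σ f * pochE 2 ^ 14 = pochE 4 ^ 6 * pochE 1 ^ 4 := by
    have h := congrArg σ step1
    rw [map_mul, map_mul, map_pow, map_pow, map_pow] at h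
    rw [hσ] at h ⊢
    rw [sigma_pochE2, sigma_pochE4, sigma_sigma] at h
    exact h
  -- Gauss squared
  have gq : pochE 1 ^ 4 = pochE 2 ^ 2 * G ^ 2 := by
    calc pochE 1 ^ 4 = (pochE 1 ^ 2) ^ 2 := by ring
      _ = (pochE 2 * G) ^ 2 := by rw [gauss]
      _ = _ := by ring
  have gs2 : (σ (pochE 1)) ^ 2 = pochE 2 * σ G := by
    have h := congrArg σ gauss
    rw [map_pow, map_mul, hσ, sigma_pochE2] at h
    exact h
  have gqs : (σ (pochE 1)) ^ 4 = pochE 2 ^ 2 * (σ G) ^ 2 := by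
    calc (σ (pochE 1)) ^ 4 = ((σ (pochE 1)) ^ 2) ^ 2 := by ring
      _ = (pochE 2 * σ G) ^ 2 := by rw [gs2]
      _ = _ := by ring
  have step3 : (f + σ f) * pochE 2 ^ 14 =
      pochE 4 ^ 6 * pochE 2 ^ 2 * (G ^ 2 + (σ G) ^ 2) := by
    calc (f + σ f) * pochE 2 ^ 14 = f * pochE 2 ^ 14 + σ f * pochE 2 ^ 14 := by ring
      _ = pochE 4 ^ 6 * (σ (pochE 1)) ^ 4 + pochE 4 ^ 6 * pochE 1 ^ 4 := by rw [step1, step2]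
      _ = _ := by rw [gq, gqs]; ring
  -- D-side
  have DA : pochE 2 * D (σ (pochE 1)) * pochE 8 = pochE 4 ^ 3 := by
    have h := congrArg D identA
    rw [map_mul, map_mul, map_pow, D_E1, D_E4, D_E2] at h
    exact h
  have Dgs2 : (D (σ (pochE 1))) ^ 2 = pochE 4 * D (σ G) := by
    have h := congrArg D gs2
    rw [map_pow, map_mul, D_E2] at h
    exact h
  have step4 : D (σ G) * (pochE 2 ^ 2 * pochE 8 ^ 2) = pochE 4 ^ 5 := by
    apply mul_left_cancel₀ (pochE_ne_zero (by norm_num : (1:ℕ) ≤ 4))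
    calc pochE 4 * (D (σ G) * (pochE 2 ^ 2 * pochE 8 ^ 2))
        = ((D (σ (pochE 1))) ^ 2) * (pochE 2 ^ 2 * pochE 8 ^ 2) := by rw [Dgs2]; ring
      _ = (pochE 2 * D (σ (pochE 1)) * pochE 8) ^ 2 := by ring
      _ = (pochE 4 ^ 3) ^ 2 := by rw [DA]
      _ = pochE 4 * pochE 4 ^ 5 := by ring
  have FACT : (f + σ f) * (pochE 2 ^ 16 * pochE 8 ^ 4) = 2 * pochE 4 ^ 16 := by
    calc (f + σ f) * (pochE 2 ^ 16 * pochE 8 ^ 4)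
        = ((f + σ f) * pochE 2 ^ 14) * (pochE 2 ^ 2 * pochE 8 ^ 4) := by ring
      _ = (pochE 4 ^ 6 * pochE 2 ^ 2 * (G ^ 2 + (σ G) ^ 2)) * (pochE 2 ^ 2 * pochE 8 ^ 4) := by
          rw [step3]
      _ = (pochE 4 ^ 6 * pochE 2 ^ 2 * (2 * (D (σ G)) ^ 2)) * (pochE 2 ^ 2 * pochE 8 ^ 4) := by
          rw [hσ] at *
          rw [theta_II]
      _ = 2 * pochE 4 ^ 6 * (D (σ G) * (pochE 2 ^ 2 * pochE 8 ^ 2)) ^ 2 := by ring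
      _ = 2 * pochE 4 ^ 6 * (pochE 4 ^ 5) ^ 2 := by rw [step4]
      _ = _ := by ring
  -- even part extraction
  have hD2 : (2 : R) * D (PowerSeries.mk fun n => bb (2 * n)) = f + σ f := by
    ext n
    rw [show (2 : R) = C 2 by simp, coeff_C_mul, map_add, hσ, coeff_rescale, hf, coeff_mk]
    rcases Nat.even_or_odd n with he | ho
    · obtain ⟨t, ht⟩ := he
      have hn : n = 2 * t := by omega
      subst hn
      rw [coeff_D_even, coeff_mk, Even.neg_one_pow (even_two_mul t)]
      ring
    · rw [coeff_D_odd _ (Nat.not_even_iff_odd.mpr ho), Odd.neg_one_pow ho]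
      ring
  have key : PowerSeries.mk (fun n => bb (2 * n)) * (pochE 1 ^ 16 * pochE 4 ^ 4) =
      pochE 2 ^ 16 := by
    apply D_inj
    apply mul_left_cancel₀ two_ne_zero_R
    rw [map_mul, map_mul, map_pow, map_pow, map_pow, D_E1, D_E4, D_E2]
    calc (2:R) * (D (PowerSeries.mk fun n => bb (2 * n)) * (pochE 2 ^ 16 * pochE 8 ^ 4))
        = ((2:R) * D (PowerSeries.mk fun n => bb (2 * n))) * (pochE 2 ^ 16 * pochE 8 ^ 4) := by
          ring
      _ = (f + σ f) * (pochE 2 ^ 16 * pochE 8 ^ 4) := by rw [hD2]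
      _ = 2 * pochE 4 ^ 16 := FACT
  -- conclude with invOfUnit
  have hconst : constantCoeff (pochE 1 ^ 16 * pochE 4 ^ 4) = ((1 : ℤˣ) : ℤ) := by
    rw [map_mul, map_pow, map_pow, constCoeff_pochE le_rfl,
      constCoeff_pochE (by norm_num : (1:ℕ) ≤ 4)]
    norm_num
  have hunit := PowerSeries.mul_invOfUnit (pochE 1 ^ 16 * pochE 4 ^ 4) 1 hconst
  calc PowerSeries.mk (fun n => bb (2 * n))
      = PowerSeries.mk (fun n => bb (2 * n)) *
        ((pochE 1 ^ 16 * pochE 4 ^ 4) *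
          PowerSeries.invOfUnit (pochE 1 ^ 16 * pochE 4 ^ 4) 1) := by rw [hunit, mul_one]
    _ = (PowerSeries.mk (fun n => bb (2 * n)) * (pochE 1 ^ 16 * pochE 4 ^ 4)) *
        PowerSeries.invOfUnit (pochE 1 ^ 16 * pochE 4 ^ 4) 1 := by ring
    _ = _ := by rw [key]
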